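/- arXiv:2312.13658 — 2 statements merged into one kernel-verified Lean document; each statement's English description precedes it below -/
import Mathlib

section
/- 𝒦-continuity of the transition map: Let the system be i-IOSS with functions β ∈ 𝒦ℒ, γ₁, γ₂ ∈ 𝒦, and let h be 𝒦-continuous with α_h ∈ 𝒦. Then f is 𝒦-continuous in the sense that there exists α_f ∈ 𝒦 such that for all x₁, x₂ ∈ ℝⁿ and w₁, w₂ ∈ ℝ^q: |f(x₁, w₁) − f(x₂, w₂)| ≤ α_f(|x₁ − x₂| + |w₁ − w₂|). -/
open Set Filter

noncomputable section

/-- `Vec m` is `ℝ^m` with the Euclidean norm. -/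
abbrev Vec (m : ℕ) := EuclideanSpace ℝ (Fin m)

/-- A function `φ : ℝ≥0 → ℝ≥0` is of class 𝒦 (modeled on `ℝ`, restricted to `[0,∞)`):
continuous, strictly increasing and `φ 0 = 0`. -/
def IsClassK (φ : ℝ → ℝ) : Prop :=
  ContinuousOn φ (Ici 0) ∧ StrictMonoOn φ (Ici 0) ∧ φ 0 = 0

/-- A function `σ : ℕ → ℝ≥0` is of class ℒ: non-increasing with limit `0`. -/
def IsClassL (σ : ℕ → ℝ) : Prop :=
  (∀ t, 0 ≤ σ t) ∧ Antitone σ ∧ Tendsto σ atTop (nhds 0)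

/-- Class 𝒦ℒ. -/
def IsClassKL (β : ℝ → ℕ → ℝ) : Prop :=
  (∀ t, IsClassK fun s => β s t) ∧ ∀ s, 0 ≤ s → IsClassL fun t => β s t

/-- Solution map of `x(t+1) = f(x(t), w(t))`, `x(0) = x₀`. -/
def sol {n q : ℕ} (f : Vec n → Vec q → Vec n) (x0 : Vec n) (w : ℕ → Vec q) : ℕ → Vec n
  | 0 => x0
  | t + 1 => f (sol f x0 w t) (w t)

/-- `|Δx(t)|`. -/
def nDx {n q : ℕ} (f : Vec n → Vec q → Vec n) (x01 x02 : Vec n) (w1 w2 : ℕ → Vec q)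
    (t : ℕ) : ℝ :=
  ‖sol f x01 w1 t - sol f x02 w2 t‖

/-- `|Δh(Δx(t))|`. -/
def nDy {n q p : ℕ} (f : Vec n → Vec q → Vec n) (h : Vec n → Vec p)
    (x01 x02 : Vec n) (w1 w2 : ℕ → Vec q) (t : ℕ) : ℝ :=
  ‖h (sol f x01 w1 t) - h (sol f x02 w2 t)‖

/-- `|Δw(t)|`. -/
def nDw {q : ℕ} (w1 w2 : ℕ → Vec q) (t : ℕ) : ℝ := ‖w1 t - w2 t‖

/-- `sup_{0 ≤ τ < t} g τ` (empty sup is `0` by the `Real.sSup` convention). -/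
def supLt (t : ℕ) (g : ℕ → ℝ) : ℝ := sSup (g '' {τ | τ < t})

/-- `sup_{τ ∈ S, τ < t} g τ`. -/
def supMem (S : Set ℕ) (t : ℕ) (g : ℕ → ℝ) : ℝ := sSup (g '' {τ | τ ∈ S ∧ τ < t})

/-- Time-discounted max over `0 ≤ τ < t` of `β (g τ) (t - τ - 1)`. -/
def dmaxLt (t : ℕ) (g : ℕ → ℝ) (β : ℝ → ℕ → ℝ) : ℝ :=
  sSup ((fun τ => β (g τ) (t - τ - 1)) '' {τ | τ < t})

/-- Time-discounted max over `τ ∈ S, τ < t` of `β (g τ) (t - τ - 1)`. -/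
def dmaxMem (S : Set ℕ) (t : ℕ) (g : ℕ → ℝ) (β : ℝ → ℕ → ℝ) : ℝ :=
  sSup ((fun τ => β (g τ) (t - τ - 1)) '' {τ | τ ∈ S ∧ τ < t})

/-- `t^i_j = δ_i + ⋯ + δ_{i+j-1}` (the sequence `δ` is 1-based; `δ 0` is unused). -/
def sampT (δ : ℕ → ℕ) (i j : ℕ) : ℕ := ∑ r ∈ Finset.range j, δ (i + r)

/-- The sampling set `K_i = {t^i_j : j ≥ 1}`. -/
def sampSet (δ : ℕ → ℕ) (i : ℕ) : Set ℕ := {m | ∃ j, 1 ≤ j ∧ m = sampT δ i j}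

/-- The i-IOSS bound with given comparison functions. -/
def iIOSSBound {n q p : ℕ} (f : Vec n → Vec q → Vec n) (h : Vec n → Vec p)
    (β : ℝ → ℕ → ℝ) (γ1 γ2 : ℝ → ℝ) : Prop :=
  ∀ x01 x02 w1 w2 t,
    nDx f x01 x02 w1 w2 t ≤
      max (β ‖x01 - x02‖ t)
        (max (γ1 (supLt t (nDw w1 w2))) (γ2 (supLt t (nDy f h x01 x02 w1 w2))))

/-- The sample-based i-IOSS bound w.r.t. the sampling set generated by `δ`. -/
def sampledIOSSBound {n q p : ℕ} (f : Vec n → Vec q → Vec n) (h : Vec n → Vec p)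
    (δ : ℕ → ℕ) (β : ℝ → ℕ → ℝ) (γ1 γ2 : ℝ → ℝ) : Prop :=
  ∀ i, 1 ≤ i → ∀ x01 x02 w1 w2 t,
    nDx f x01 x02 w1 w2 t ≤
      max (β ‖x01 - x02‖ t)
        (max (γ1 (supLt t (nDw w1 w2)))
             (γ2 (supMem (sampSet δ i) t (nDy f h x01 x02 w1 w2))))

/-- The sample-based i-IOSS bound on an input set `W`. -/
def sampledIOSSBoundOn {n q p : ℕ} (f : Vec n → Vec q → Vec n) (h : Vec n → Vec p)
    (W : Set (ℕ → Vec q)) (δ : ℕ → ℕ) (β : ℝ → ℕ → ℝ) (γ1 γ2 : ℝ → ℝ) : Prop :=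
  ∀ i, 1 ≤ i → ∀ x01 x02, ∀ w1 ∈ W, ∀ w2 ∈ W, ∀ t,
    nDx f x01 x02 w1 w2 t ≤
      max (β ‖x01 - x02‖ t)
        (max (γ1 (supLt t (nDw w1 w2)))
             (γ2 (supMem (sampSet δ i) t (nDy f h x01 x02 w1 w2))))

/-- The sample-based time-discounted i-IOSS bound. -/
def sampledTDBound {n q p : ℕ} (f : Vec n → Vec q → Vec n) (h : Vec n → Vec p)
    (δ : ℕ → ℕ) (βx βu βy : ℝ → ℕ → ℝ) : Prop :=
  ∀ i, 1 ≤ i → ∀ x01 x02 w1 w2 t,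
    nDx f x01 x02 w1 w2 t ≤
      max (βx ‖x01 - x02‖ t)
        (max (dmaxLt t (nDw w1 w2) βu)
             (dmaxMem (sampSet δ i) t (nDy f h x01 x02 w1 w2) βy))

/-- The sample-based time-discounted i-IOSS bound on an input set `W`. -/
def sampledTDBoundOn {n q p : ℕ} (f : Vec n → Vec q → Vec n) (h : Vec n → Vec p)
    (W : Set (ℕ → Vec q)) (δ : ℕ → ℕ) (βx βu βy : ℝ → ℕ → ℝ) : Prop :=
  ∀ i, 1 ≤ i → ∀ x01 x02, ∀ w1 ∈ W, ∀ w2 ∈ W, ∀ t,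
    nDx f x01 x02 w1 w2 t ≤
      max (βx ‖x01 - x02‖ t)
        (max (dmaxLt t (nDw w1 w2) βu)
             (dmaxMem (sampSet δ i) t (nDy f h x01 x02 w1 w2) βy))

/-- `(x₀₁, x₀₂, w₁, w₂)` generates a pair of i-ISS trajectories relative to `(β, γ1, σ1)`. -/
def pairISS {n q : ℕ} (f : Vec n → Vec q → Vec n) (β : ℝ → ℕ → ℝ) (γ1 : ℝ → ℝ)
    (σ1 : ℕ → ℝ) (x01 x02 : Vec n) (w1 w2 : ℕ → Vec q) : Prop :=
  ∀ t, nDx f x01 x02 w1 w2 t ≤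
    max (β ‖x01 - x02‖ t)
      (sSup ((fun τ => γ1 (nDw w1 w2 τ) * σ1 (t - τ - 1)) '' {τ | τ < t}))


lemma classK_mono {φ : ℝ → ℝ} (hφ : IsClassK φ) {a b : ℝ} (ha : 0 ≤ a) (hab : a ≤ b) :
    φ a ≤ φ b :=
  hφ.2.1.monotoneOn ha (le_trans ha hab) hab

lemma classK_nonneg {φ : ℝ → ℝ} (hφ : IsClassK φ) {a : ℝ} (ha : 0 ≤ a) : 0 ≤ φ a := by
  have := classK_mono hφ le_rfl ha
  rwa [hφ.2.2] at this

lemma classK_maps {φ : ℝ → ℝ} (hφ : IsClassK φ) : Set.MapsTo φ (Set.Ici 0) (Set.Ici 0) :=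
  fun _ hx => classK_nonneg hφ hx

lemma IsClassK.add {φ ψ : ℝ → ℝ} (hφ : IsClassK φ) (hψ : IsClassK ψ) :
    IsClassK (fun s => φ s + ψ s) :=
  ⟨hφ.1.add hψ.1, hφ.2.1.add hψ.2.1, by simp [hφ.2.2, hψ.2.2]⟩

lemma IsClassK.comp {φ ψ : ℝ → ℝ} (hφ : IsClassK φ) (hψ : IsClassK ψ) :
    IsClassK (fun s => φ (ψ s)) :=
  ⟨hφ.1.comp hψ.1 (classK_maps hψ), hφ.2.1.comp hψ.2.1 (classK_maps hψ),
    by simp [hψ.2.2, hφ.2.2]⟩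

lemma supLt_one (g : ℕ → ℝ) : supLt 1 g = g 0 := by
  have : {τ : ℕ | τ < 1} = {0} := by ext τ; simp [Nat.lt_one_iff]
  simp [supLt, this]

/-- 𝒦-continuity of the transition map `f` for an i-IOSS system with 𝒦-continuous output. -/
theorem f_is_K_continuous {n q p : ℕ}
    (f : Vec n → Vec q → Vec n) (h : Vec n → Vec p)
    (β : ℝ → ℕ → ℝ) (γ1 γ2 : ℝ → ℝ)
    (hβ : IsClassKL β) (hγ1 : IsClassK γ1) (hγ2 : IsClassK γ2)
    (hiIOSS : iIOSSBound f h β γ1 γ2)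
    (αh : ℝ → ℝ) (hαh : IsClassK αh)
    (hKcont : ∀ x1 x2 : Vec n, ‖h x1 - h x2‖ ≤ αh ‖x1 - x2‖) :
    ∃ αf : ℝ → ℝ, IsClassK αf ∧
      ∀ (x1 x2 : Vec n) (w1 w2 : Vec q),
        ‖f x1 w1 - f x2 w2‖ ≤ αf (‖x1 - x2‖ + ‖w1 - w2‖) := by
  obtain ⟨hβK, _⟩ := hβ
  have hβ1 : IsClassK (fun s => β s 1) := hβK 1
  refine ⟨fun s => β s 1 + γ1 s + γ2 (αh s),
    (hβ1.add hγ1).add (hγ2.comp hαh), fun x1 x2 w1 w2 => ?_⟩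
  set s := ‖x1 - x2‖ + ‖w1 - w2‖ with hs
  have hx : (0:ℝ) ≤ ‖x1 - x2‖ := norm_nonneg _
  have hw : (0:ℝ) ≤ ‖w1 - w2‖ := norm_nonneg _
  have hxs : ‖x1 - x2‖ ≤ s := by simp [hs, hw]
  have hws : ‖w1 - w2‖ ≤ s := by simp [hs, hx]
  have hkey := hiIOSS x1 x2 (fun _ => w1) (fun _ => w2) 1
  have hdx : nDx f x1 x2 (fun _ => w1) (fun _ => w2) 1 = ‖f x1 w1 - f x2 w2‖ := by
    simp [nDx, sol]
  have hdw : supLt 1 (nDw (fun _ => w1) (fun _ => w2)) = ‖w1 - w2‖ := by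
    simp [supLt_one, nDw]
  have hdy : supLt 1 (nDy f h x1 x2 (fun _ => w1) (fun _ => w2)) = ‖h x1 - h x2‖ := by
    simp [supLt_one, nDy, sol]
  rw [hdx, hdw, hdy] at hkey
  have h1 : β ‖x1 - x2‖ 1 ≤ β s 1 + γ1 s + γ2 (αh s) := by
    have := classK_mono hβ1 hx hxs
    have h2 := classK_nonneg hγ1 (hx.trans hxs)
    have h3 := classK_nonneg hγ2 (classK_nonneg hαh (hx.trans hxs))
    linarith
  have h2 : γ1 ‖w1 - w2‖ ≤ β s 1 + γ1 s + γ2 (αh s) := by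
    have := classK_mono hγ1 hw hws
    have h2 := classK_nonneg hβ1 (hx.trans hxs)
    have h3 := classK_nonneg hγ2 (classK_nonneg hαh (hx.trans hxs))
    linarith
  have h3 : γ2 ‖h x1 - h x2‖ ≤ β s 1 + γ1 s + γ2 (αh s) := by
    have hy : ‖h x1 - h x2‖ ≤ αh s :=
      (hKcont x1 x2).trans (classK_mono hαh hx hxs)
    have := classK_mono hγ2 (norm_nonneg _) hy
    have h2 := classK_nonneg hβ1 (hx.trans hxs)
    have h3 := classK_nonneg hγ1 (hx.trans hxs)
    linarith
  calc ‖f x1 w1 - f x2 w2‖ ≤ _ := hkey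
    _ ≤ β s 1 + γ1 s + γ2 (αh s) := by
        apply max_le h1 (max_le h2 h3)
end
end

section
/- Intermediate bound in the proof of Theorem 2 (equation (30) of the paper): Suppose the system satisfies the sample-based i-IOSS bound with respect to a sampling set K with functions β̄ ∈ 𝒦ℒ and γ̄₁, γ̄₂ ∈ 𝒦. Let x₀₁, x₀₂ be initial conditions, w₁, w₂ input sequences, and T ∈ ℕ such that there exists t_ψ ≤ T with |Δx(t_ψ)| > β̄(|Δx₀|, t_ψ). Then for all t ≥ T and every K_i ∈ K: |Δx(t)| ≤ γ̄₁(sup_{0≤τ<t} |Δw(τ)|) ⊕ γ̄₂(sup_{τ∈K_i, τ<t} |Δh(Δx(τ))|). -/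
open Set Filter

noncomputable section

lemma sSup_image_mono_aux {g : ℕ → ℝ} (hg : ∀ τ, 0 ≤ g τ) {A B : Set ℕ}
    (hAB : A ⊆ B) (hB : B.Finite) : sSup (g '' A) ≤ sSup (g '' B) := by
  rcases A.eq_empty_or_nonempty with hA | hA
  · rw [hA, Set.image_empty, Real.sSup_empty]
    exact Real.sSup_nonneg (by rintro x ⟨τ, _, rfl⟩; exact hg τ) -- X
  · exact csSup_le_csSup (hB.image g).bddAbove (hA.image g) (Set.image_mono hAB)

lemma supLt_nonneg {g : ℕ → ℝ} (hg : ∀ τ, 0 ≤ g τ) (t : ℕ) : 0 ≤ supLt t g :=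
  Real.sSup_nonneg (by rintro x ⟨τ, _, rfl⟩; exact hg τ)

lemma supMem_nonneg {g : ℕ → ℝ} (hg : ∀ τ, 0 ≤ g τ) (S : Set ℕ) (t : ℕ) :
    0 ≤ supMem S t g :=
  Real.sSup_nonneg (by rintro x ⟨τ, _, rfl⟩; exact hg τ)

lemma supLt_mono {g : ℕ → ℝ} (hg : ∀ τ, 0 ≤ g τ) {a b : ℕ} (hab : a ≤ b) :
    supLt a g ≤ supLt b g := by
  apply sSup_image_mono_aux hg (fun τ hτ => lt_of_lt_of_le hτ hab)
  exact Set.finite_Iio b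

lemma supMem_mono {g : ℕ → ℝ} (hg : ∀ τ, 0 ≤ g τ) (S : Set ℕ) {a b : ℕ} (hab : a ≤ b) :
    supMem S a g ≤ supMem S b g := by
  refine sSup_image_mono_aux hg ?_ ((Set.finite_Iio b).subset (by rintro τ ⟨_, h2⟩; exact h2))
  rintro τ ⟨h1, h2⟩
  exact ⟨h1, lt_of_lt_of_le h2 hab⟩

/-- Intermediate bound in the proof of Theorem 2 (equation (30) of the paper). -/
theorem intermediate_bound_eq30 {n q p : ℕ}
    (f : Vec n → Vec q → Vec n) (h : Vec n → Vec p)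
    (δ : ℕ → ℕ) (δmax : ℕ) (hδ : ∀ i, 1 ≤ i → δ i ≤ δmax)
    (βb : ℝ → ℕ → ℝ) (γb1 γb2 : ℝ → ℝ)
    (hβb : IsClassKL βb) (hγb1 : IsClassK γb1) (hγb2 : IsClassK γb2)
    (hsb : sampledIOSSBound f h δ βb γb1 γb2)
    (x01 x02 : Vec n) (w1 w2 : ℕ → Vec q) (T : ℕ)
    (hviol : ∃ tψ ≤ T, βb ‖x01 - x02‖ tψ < nDx f x01 x02 w1 w2 tψ) :
    ∀ t, T ≤ t → ∀ i, 1 ≤ i →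
      nDx f x01 x02 w1 w2 t ≤
        max (γb1 (supLt t (nDw w1 w2)))
            (γb2 (supMem (sampSet δ i) t (nDy f h x01 x02 w1 w2))) := by
  obtain ⟨tψ, htψT, hv⟩ := hviol
  intro t ht i hi
  have hwnn : ∀ τ, 0 ≤ nDw w1 w2 τ := fun τ => norm_nonneg _
  have hynn : ∀ τ, 0 ≤ nDy f h x01 x02 w1 w2 τ := fun τ => norm_nonneg _
  have htψt : tψ ≤ t := le_trans htψT ht
  set M : ℕ → ℝ := fun s => max (γb1 (supLt s (nDw w1 w2)))
      (γb2 (supMem (sampSet δ i) s (nDy f h x01 x02 w1 w2))) with hM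
  -- at tψ the γ terms dominate
  have h1 : nDx f x01 x02 w1 w2 tψ ≤ M tψ := by
    have := hsb i hi x01 x02 w1 w2 tψ
    rcases le_total (βb ‖x01 - x02‖ tψ) (M tψ) with hle | hle
    · exact this.trans (max_eq_right hle).le
    · exact absurd (this.trans (max_eq_left hle).le) (not_le.mpr hv)
  -- M is monotone in time
  have hMmono : M tψ ≤ M t := by
    apply max_le_max
    · exact (hγb1.2.1.monotoneOn) (supLt_nonneg hwnn tψ) (supLt_nonneg hwnn t)
        (supLt_mono hwnn htψt)
    · exact (hγb2.2.1.monotoneOn) (supMem_nonneg hynn _ tψ) (supMem_nonneg hynn _ t)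
        (supMem_mono hynn _ htψt)
  -- β(s, t) ≤ β(s, tψ) < nDx(tψ) ≤ M(tψ) ≤ M(t)
  have hβle : βb ‖x01 - x02‖ t ≤ M t := by
    have hanti := (hβb.2 ‖x01 - x02‖ (norm_nonneg _)).2.1 htψt
    exact le_trans hanti (le_trans hv.le (h1.trans hMmono))
  have := hsb i hi x01 x02 w1 w2 t
  calc nDx f x01 x02 w1 w2 t ≤ max (βb ‖x01 - x02‖ t) (M t) := this
    _ ≤ M t := max_le hβle le_rfl
end
end
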